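/- Consider the cumulative (Madow) arrangement: with c_0 = 0 and c_k = c_{k-1} + π_k, unit k's bar is the set B_k = {x ∈ [0,1) : frac(c_{k-1}) ≤ x < frac(c_{k-1}) + π_k mod 1} i.e. the image of [c_{k-1}, c_k) under reduction modulo 1 (wrapping around at 1). If the total n = Σ_k π_k is a positive integer and r is uniform on [0,1), then the sample size |{k : r ∈ B_k}| equals n with probability 1. -/

import Mathlib

open MeasureTheory Classical in
/-- Madow cumulative arrangement: if the inclusion probabilities sum to a
positive integer `n`, then for `r` uniform on `[0,1)` the sample size equals
`n` with probability 1.  Unit `k`'s bar is the wrapped interval of length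
`π k` starting at `c k mod 1`, where `c k = π 0 + ⋯ + π (k-1)`: a point
`x ∈ [0,1)` lies in the bar iff `fract (x - c k) < π k`. -/
theorem stmt_3 (N n : ℕ) (hn : 1 ≤ n) (π : ℕ → ℝ)
    (hπ : ∀ k < N, π k ∈ Set.Icc (0:ℝ) 1)
    (c : ℕ → ℝ) (hc : ∀ k, c k = ∑ j ∈ Finset.range k, π j)
    (B : ℕ → Set ℝ)
    (hB : ∀ k, B k = {x ∈ Set.Ico (0:ℝ) 1 | Int.fract (x - c k) < π k})
    (hsum : c N = n) :
    ∀ᵐ r ∂(volume.restrict (Set.Ico (0:ℝ) 1)),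
      ((Finset.range N).filter (fun k => r ∈ B k)).card = n := by
  filter_upwards [ae_restrict_mem measurableSet_Ico] with r hr
  obtain ⟨hr0, hr1⟩ := hr
  -- indicator as a floor difference
  have key : ∀ k ∈ Finset.range N,
      (if r ∈ B k then (1:ℤ) else 0) = ⌊r - c k⌋ - ⌊r - c (k+1)⌋ := by
    intro k hk
    have hk' := Finset.mem_range.mp hk
    obtain ⟨hp0, hp1⟩ := hπ k hk'
    have hc1 : c (k+1) = c k + π k := by
      rw [hc, hc, Finset.sum_range_succ]
    have hmem : r ∈ B k ↔ Int.fract (r - c k) < π k := by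
      rw [hB]; simp [hr0, hr1]
    set x := r - c k with hx
    have hsub : r - c (k+1) = x - π k := by rw [hc1]; ring
    by_cases h : Int.fract x < π k
    · have hfl : ⌊x - π k⌋ = ⌊x⌋ - 1 := by
        rw [Int.floor_eq_iff]
        constructor
        · push_cast
          have := Int.floor_le x
          linarith
        · push_cast
          have : x - (⌊x⌋ : ℝ) < π k := h
          linarith
      simp [hmem.mpr h, hsub, hfl]
    · have hge : π k ≤ Int.fract x := not_lt.mp h
      have hfl : ⌊x - π k⌋ = ⌊x⌋ := by
        rw [Int.floor_eq_iff]
        constructor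
        · have : (⌊x⌋ : ℝ) + π k ≤ x := by
            have : x - (⌊x⌋ : ℝ) ≥ π k := hge
            linarith
          linarith
        · push_cast
          have := Int.lt_floor_add_one x
          linarith
      have : r ∉ B k := fun hb => h (hmem.mp hb)
      simp [this, hsub, hfl]
  have hcard : (((Finset.range N).filter (fun k => r ∈ B k)).card : ℤ)
      = ∑ k ∈ Finset.range N, (if r ∈ B k then (1:ℤ) else 0) := by
    rw [Finset.card_filter]
    push_cast
    rfl
  have hsum' : ∑ k ∈ Finset.range N, (if r ∈ B k then (1:ℤ) else 0)
      = ⌊r - c 0⌋ - ⌊r - c N⌋ := by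
    rw [Finset.sum_congr rfl key]
    exact Finset.sum_range_sub' (fun k => ⌊r - c k⌋) N
  have hc0 : c 0 = 0 := by rw [hc]; simp
  have hf0 : ⌊r - c 0⌋ = 0 := by
    rw [hc0, sub_zero, Int.floor_eq_zero_iff]
    exact ⟨hr0, hr1⟩
  have hfN : ⌊r - c N⌋ = -(n : ℤ) := by
    rw [hsum, Int.floor_sub_natCast, Int.floor_eq_zero_iff.mpr ⟨hr0, hr1⟩]
    ring
  have : (((Finset.range N).filter (fun k => r ∈ B k)).card : ℤ) = n := by
    rw [hcard, hsum', hf0, hfN]; ring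
  exact_mod_cast this
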